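/- arXiv:1102.2566 — 4 statements merged into one kernel-verified Lean document; each statement's English description precedes it below -/
import Mathlib

section
/- Let m, n be positive integers, let α₁, …, αₙ be pairwise distinct elements of the field F = GF(2^m), and let G ∈ F[X] be a square-free polynomial such that G(αᵢ) ≠ 0 for all i. Then the binary Goppa codes Γ(L,G) and Γ(L,G²) are equal, i.e., for every c ∈ (F₂)ⁿ, G divides Σᵢ cᵢ·∏_{j≠i}(X − αⱼ) in F[X] if and only if G² divides Σᵢ cᵢ·∏_{j≠i}(X − αⱼ) in F[X]. -/
open Polynomial

/-- The "syndrome" polynomial `Σᵢ cᵢ · ∏_{j ≠ i} (X - αⱼ)` associated to a binary word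
`c ∈ (F₂)ⁿ` and a support `α : Fin n → GF(2^m)`, with the coordinates of `c` viewed in
`GF(2^m)` via the inclusion `F₂ ⊆ GF(2^m)`.  A word `c` belongs to the binary Goppa code
`Γ(L, G)` iff `G` divides this polynomial. -/
noncomputable def goppaSyndrome {m n : ℕ} (α : Fin n → GaloisField 2 m)
    (c : Fin n → ZMod 2) : Polynomial (GaloisField 2 m) :=
  ∑ i, algebraMap (ZMod 2) (GaloisField 2 m) (c i) •
    ∏ j ∈ Finset.univ \ {i}, (X - C (α j))

variable {m : ℕ}

lemma deriv_deriv_char2 (f : Polynomial (GaloisField 2 m)) :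
    derivative (derivative f) = 0 := by
  ext k
  simp only [coeff_derivative, coeff_zero]
  have h2 : ((2 : ℕ) : GaloisField 2 m) = 0 := by
    exact_mod_cast CharP.cast_eq_zero (GaloisField 2 m) 2
  have : ((k + 1 : ℕ) : GaloisField 2 m) * ((k + 2 : ℕ) : GaloisField 2 m) = 0 := by
    obtain ⟨t, ht⟩ : 2 ∣ (k + 1) * (k + 2) := (Nat.even_mul_succ_self (k+1)).two_dvd
    calc ((k + 1 : ℕ) : GaloisField 2 m) * ((k + 2 : ℕ) : GaloisField 2 m)
        = (((k+1)*(k+2) : ℕ) : GaloisField 2 m) := by push_cast; ring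
      _ = 0 := by rw [ht, Nat.cast_mul, h2, zero_mul]
  push_cast at this ⊢
  calc f.coeff (k + 1 + 1) * (↑k + 1 + 1) * (↑k + 1)
      = f.coeff (k + 2) * ((↑k + 1) * (↑k + 2)) := by ring_nf
    _ = 0 := by rw [this]; ring

lemma deriv_is_sq (f : Polynomial (GaloisField 2 m)) :
    ∃ h : Polynomial (GaloisField 2 m), derivative f = h ^ 2 := by
  have hc : CharP (GaloisField 2 m) 2 := inferInstance
  have hd := deriv_deriv_char2 f
  have hec : expand (GaloisField 2 m) 2 (contract 2 (derivative f)) = derivative f :=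
    expand_contract 2 hd two_ne_zero
  set g := contract 2 (derivative f)
  let σ := frobeniusEquiv (GaloisField 2 m) 2
  refine ⟨(g.map (σ.symm : GaloisField 2 m →+* GaloisField 2 m)), ?_⟩
  have := map_frobenius_expand 2 (g.map (σ.symm : GaloisField 2 m →+* GaloisField 2 m))
  rw [map_expand, map_map] at this
  have hcomp : (frobenius (GaloisField 2 m) 2).comp
      (σ.symm : GaloisField 2 m →+* GaloisField 2 m) = RingHom.id _ := by
    ext x
    exact (frobeniusEquiv (GaloisField 2 m) 2).apply_symm_apply x
  rw [hcomp, map_id, hec] at this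
  exact this

lemma derivative_finset_prod {ι : Type*} [DecidableEq ι] (s : Finset ι)
    (f : ι → Polynomial (GaloisField 2 m)) :
    derivative (∏ i ∈ s, f i) = ∑ i ∈ s, (∏ j ∈ s.erase i, f j) * derivative (f i) := by
  rw [Finset.prod_eq_multiset_prod, derivative_prod, Finset.sum_eq_multiset_sum]
  congr 1



/-- If `G` is square-free and vanishes at no support element, then `Γ(L, G) = Γ(L, G²)`. -/
theorem goppa_code_squarefree_eq_sq (m n : ℕ) (hm : 0 < m) (hn : 0 < n)
    (α : Fin n → GaloisField 2 m) (hα : Function.Injective α)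
    (G : Polynomial (GaloisField 2 m)) (hsq : Squarefree G)
    (hroots : ∀ i, G.eval (α i) ≠ 0) (c : Fin n → ZMod 2) :
    G ∣ goppaSyndrome α c ↔ G ^ 2 ∣ goppaSyndrome α c := by
  classical
  set s : Finset (Fin n) := Finset.univ.filter (fun i => c i = 1) with hs
  set f : Polynomial (GaloisField 2 m) := ∏ i ∈ s, (X - C (α i)) with hf
  set g : Polynomial (GaloisField 2 m) := ∏ i ∈ Finset.univ \ s, (X - C (α i)) with hg
  have h01 : ∀ x : ZMod 2, x = 0 ∨ x = 1 := by decide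
  have step1 : goppaSyndrome α c = ∑ i ∈ s, ∏ j ∈ Finset.univ \ {i}, (X - C (α j)) := by
    rw [goppaSyndrome, ← Finset.sum_subset (Finset.subset_univ s)]
    · refine Finset.sum_congr rfl fun i hi => ?_
      have hci : c i = 1 := (Finset.mem_filter.mp hi).2
      rw [hci]; simp
    · intro i _ hi
      have hci : c i = 0 := by
        rcases h01 (c i) with h | h
        · exact h
        · exact absurd (Finset.mem_filter.mpr ⟨Finset.mem_univ i, h⟩) hi
      rw [hci]; simp
  have hsplit : ∀ i ∈ s, (Finset.univ \ {i} : Finset (Fin n)) = (s.erase i) ∪ (Finset.univ \ s) := by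
    intro i hi
    ext j
    simp only [Finset.mem_sdiff, Finset.mem_univ, Finset.mem_singleton, true_and,
      Finset.mem_union, Finset.mem_erase]
    constructor
    · intro hji
      by_cases hjs : j ∈ s
      · exact Or.inl ⟨hji, hjs⟩
      · exact Or.inr hjs
    · rintro (⟨hji, _⟩ | hjs)
      · exact hji
      · rintro rfl; exact hjs hi
  have hsyn : goppaSyndrome α c = derivative f * g := by
    rw [step1, hf, derivative_finset_prod, Finset.sum_mul]
    refine Finset.sum_congr rfl fun i hi => ?_
    rw [hsplit i hi, Finset.prod_union
      (Finset.disjoint_sdiff.mono_left (Finset.erase_subset i s))]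
    simp [hg]
  have hcopg : IsCoprime G g :=
    IsCoprime.prod_right fun i _ =>
      ((irreducible_X_sub_C (α i)).coprime_iff_not_dvd.mpr
        (fun hd => hroots i (dvd_iff_isRoot.mp hd))).symm
  obtain ⟨h, hh⟩ := deriv_is_sq f
  rw [hsyn, hh]
  constructor
  · intro hG
    have hGh2 : G ∣ h ^ 2 := hcopg.dvd_of_dvd_mul_right hG
    have hGh : G ∣ h := (hsq.dvd_pow_iff_dvd two_ne_zero).mp hGh2
    exact (pow_dvd_pow_of_dvd hGh 2).mul_right g
  · intro hG2
    exact dvd_trans (dvd_pow_self G two_ne_zero) hG2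
end

section
/- Let m, n be positive integers, let α₁, …, αₙ be pairwise distinct elements of the field F = GF(2^m), and let G ∈ F[X] be a nonzero polynomial with G(αᵢ) ≠ 0 for all i. Then every nonzero codeword c of the binary Goppa code Γ(L,G) has Hamming weight at least deg G + 1. -/
open Polynomial

/-- Every nonzero codeword of the binary Goppa code `Γ(L, G)` has Hamming weight at least
`deg G + 1`. -/
theorem goppa_code_min_weight (m n : ℕ) (hm : 0 < m) (hn : 0 < n)
    (α : Fin n → GaloisField 2 m) (hα : Function.Injective α)
    (G : Polynomial (GaloisField 2 m)) (hG : G ≠ 0)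
    (hroots : ∀ i, G.eval (α i) ≠ 0) (c : Fin n → ZMod 2)
    (hc : c ≠ 0) (hcode : G ∣ goppaSyndrome α c) :
    G.natDegree + 1 ≤ hammingNorm c := by
  classical
  set S : Finset (Fin n) := Finset.univ.filter (fun i => c i ≠ 0) with hSdef
  have hnorm : hammingNorm c = S.card := rfl
  -- S is nonempty
  obtain ⟨i₀, hi₀⟩ : ∃ i, c i ≠ 0 := by
    by_contra h
    push_neg at h
    exact hc (funext fun i => h i)
  have hi₀S : i₀ ∈ S := Finset.mem_filter.2 ⟨Finset.mem_univ _, hi₀⟩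
  set g : Polynomial (GaloisField 2 m) := ∏ j ∈ Finset.univ \ S, (X - C (α j)) with hgdef
  set h : Polynomial (GaloisField 2 m) := ∑ i ∈ S, ∏ j ∈ S.erase i, (X - C (α j)) with hhdef
  -- syndrome = h * g
  have key : goppaSyndrome α c = h * g := by
    rw [goppaSyndrome, ← Finset.sum_filter_add_sum_filter_not Finset.univ (fun i => c i ≠ 0)]
    have h2 : ∑ i ∈ Finset.univ.filter (fun i => ¬ c i ≠ 0),
        algebraMap (ZMod 2) (GaloisField 2 m) (c i) • ∏ j ∈ Finset.univ \ {i}, (X - C (α j)) = 0 := by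
      apply Finset.sum_eq_zero
      intro i hi
      simp only [Finset.mem_filter, not_not] at hi
      rw [hi.2]
      simp
    rw [h2, add_zero, hhdef, Finset.sum_mul]
    apply Finset.sum_congr rfl
    intro i hi
    have hci : c i = 1 := by
      have h01 : ∀ x : ZMod 2, x ≠ 0 → x = 1 := by decide
      exact h01 _ (Finset.mem_filter.1 hi).2
    rw [hci, map_one, one_smul]
    have hsplit : Finset.univ \ {i} = (S.erase i) ∪ (Finset.univ \ S) := by
      ext j
      simp only [Finset.mem_sdiff, Finset.mem_union, Finset.mem_erase, Finset.mem_univ,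
        Finset.mem_singleton, true_and]
      constructor
      · intro hj
        by_cases hjS : j ∈ S
        · exact Or.inl ⟨hj, hjS⟩
        · exact Or.inr hjS
      · rintro (⟨hj, _⟩ | hj)
        · exact hj
        · rintro rfl; exact hj hi
    have hdisj : Disjoint (S.erase i) (Finset.univ \ S) := by
      rw [Finset.disjoint_left]
      intro j hj hj'
      exact (Finset.mem_sdiff.1 hj').2 (Finset.mem_of_mem_erase hj)
    rw [hsplit, Finset.prod_union hdisj]
  -- G coprime to g
  have hcop : IsCoprime G g := by
    apply IsCoprime.prod_right
    intro j _
    apply IsCoprime.symm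
    rw [(irreducible_X_sub_C (α j)).coprime_iff_not_dvd, dvd_iff_isRoot, IsRoot.def]
    exact hroots j
  have hGh : G ∣ h := by
    rw [key] at hcode
    exact hcop.dvd_of_dvd_mul_right hcode
  -- h ≠ 0: evaluate at α i₀
  have hh0 : h ≠ 0 := by
    intro h0
    have heval : h.eval (α i₀) = ∏ j ∈ S.erase i₀, (α i₀ - α j) := by
      rw [hhdef, eval_finset_sum]
      rw [Finset.sum_eq_single i₀]
      · rw [eval_prod]; simp
      · intro i hiS hne
        rw [eval_prod]
        apply Finset.prod_eq_zero (i := i₀) (Finset.mem_erase.2 ⟨fun e => hne e.symm, hi₀S⟩)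
        simp
      · intro habs; exact absurd hi₀S habs
    have hne : h.eval (α i₀) ≠ 0 := by
      rw [heval]
      apply Finset.prod_ne_zero_iff.2
      intro j hj
      have : α i₀ ≠ α j := fun e => (Finset.mem_erase.1 hj).1 (hα e.symm)
      exact sub_ne_zero_of_ne this
    rw [h0] at hne
    simp at hne
  -- degree bound
  have hdeg : h.natDegree ≤ S.card - 1 := by
    apply le_trans (natDegree_sum_le _ _)
    rw [Finset.fold_max_le]
    refine ⟨by omega, ?_⟩
    intro i hi
    refine le_trans (natDegree_prod_le _ _) (le_of_eq ?_)
    simp [Finset.card_erase_of_mem hi]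
  have hGd : G.natDegree ≤ h.natDegree := Polynomial.natDegree_le_of_dvd hGh hh0
  have hScard : 1 ≤ S.card := Finset.card_pos.2 ⟨i₀, hi₀S⟩
  rw [hnorm]
  omega
end

section
/- Let m, n be positive integers, let α₁, …, αₙ be pairwise distinct elements of the field F = GF(2^m), and let G ∈ F[X] be a nonzero polynomial of degree r with G(αᵢ) ≠ 0 for all i. Then the binary Goppa code Γ(L,G), viewed as an F₂-linear subspace of (F₂)ⁿ, has dimension at least n − m·r. -/
open Polynomial

/-- The binary Goppa code `Γ(L, G)` with support `α : Fin n → GF(2^m)` and Goppa polynomial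
`G`, as an `F₂`-linear subspace of `(F₂)ⁿ`.  It is the kernel of the `F₂`-linear map sending
`c ∈ (F₂)ⁿ` to the class of `Σᵢ cᵢ · ∏_{j ≠ i} (X - αⱼ)` modulo `G`; thus `c ∈ Γ(L, G)` iff
`G` divides `Σᵢ cᵢ · ∏_{j ≠ i} (X - αⱼ)` in `GF(2^m)[X]`. -/
noncomputable def goppaCode {m n : ℕ} (α : Fin n → GaloisField 2 m)
    (G : Polynomial (GaloisField 2 m)) : Submodule (ZMod 2) (Fin n → ZMod 2) :=
  LinearMap.ker
    ((Ideal.Quotient.mkₐ (ZMod 2) (Ideal.span {G})).toLinearMap.comp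
      (Fintype.linearCombination (ZMod 2)
        (fun i => ∏ j ∈ Finset.univ \ {i}, (X - C (α j)))))

/-- The binary Goppa code `Γ(L, G)` with a Goppa polynomial of degree `r` has `F₂`-dimension
at least `n - m·r`. -/
theorem goppa_code_dimension (m n : ℕ) (hm : 0 < m) (hn : 0 < n)
    (α : Fin n → GaloisField 2 m) (hα : Function.Injective α)
    (G : Polynomial (GaloisField 2 m)) (hG : G ≠ 0)
    (hroots : ∀ i, G.eval (α i) ≠ 0) :
    n - m * G.natDegree ≤ Module.finrank (ZMod 2) (goppaCode α G) := by
  classical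
  let F := GaloisField 2 m
  let Q := Polynomial F ⧸ (Ideal.span {G} : Ideal (Polynomial F))
  let f : (Fin n → ZMod 2) →ₗ[ZMod 2] Q :=
    ((Ideal.Quotient.mkₐ (ZMod 2) (Ideal.span {G})).toLinearMap.comp
      (Fintype.linearCombination (ZMod 2)
        (fun i => ∏ j ∈ Finset.univ \ {i}, (X - C (α j)))))
  have hQF : FiniteDimensional F Q := (AdjoinRoot.powerBasis hG).finite
  have hQ2 : FiniteDimensional (ZMod 2) Q := FiniteDimensional.trans (ZMod 2) F Q
  have hFQ : Module.finrank F Q = G.natDegree := (AdjoinRoot.powerBasis hG).finrank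
  have hdimQ : Module.finrank (ZMod 2) Q = m * G.natDegree := by
    rw [← Module.finrank_mul_finrank (ZMod 2) F Q, GaloisField.finrank 2 hm.ne', hFQ]
  have hrn := f.finrank_range_add_finrank_ker
  have hle : Module.finrank (ZMod 2) (LinearMap.range f) ≤ m * G.natDegree := by
    rw [← hdimQ]; exact Submodule.finrank_le _
  have hker : goppaCode α G = LinearMap.ker f := rfl
  rw [Module.finrank_fintype_fun_eq_card, Fintype.card_fin] at hrn
  rw [hker]
  omega
end

section
/- Let m, n be positive integers, let α₁, …, αₙ be pairwise distinct elements of the field F = GF(2^m), and let G ∈ F[X] be a nonconstant square-free polynomial of degree r with G(αᵢ) ≠ 0 for all i. Then the binary Goppa code Γ(L,G²), viewed as an F₂-linear subspace of (F₂)ⁿ, has dimension at least n − m·r (rather than only the generic bound n − 2m·r for a Goppa polynomial of degree 2r). -/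
open Polynomial Finset

section AuxLemmas

lemma goppaAux_derivative_derivative_eq_zero {K : Type*} [Field K] [CharP K 2] (f : K[X]) :
    derivative (derivative f) = 0 := by
  ext k
  rw [coeff_derivative, coeff_derivative, coeff_zero, mul_assoc]
  have h2 : (2 : ℕ) ∣ (k + 1) * (k + 1 + 1) := (Nat.even_mul_succ_self (k+1)).two_dvd
  have h0 : (((k+1)*(k+1+1) : ℕ) : K) = 0 := (CharP.cast_eq_zero_iff K 2 _).2 h2
  push_cast at h0 ⊢
  rw [show ((k:K)+1+1)*((k:K)+1) = ((k:K)+1)*((k:K)+1+1) from mul_comm _ _, h0, mul_zero]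

lemma goppaAux_isSquare_derivative {K : Type*} [Field K] [CharP K 2] [PerfectRing K 2]
    (f : K[X]) : IsSquare (derivative f) := by
  have hfact : Fact (Nat.Prime 2) := ⟨Nat.prime_two⟩
  have h := Polynomial.expand_contract 2 (goppaAux_derivative_derivative_eq_zero f) (two_ne_zero)
  set q := contract 2 (derivative f) with hq
  refine ⟨q.map (frobeniusEquiv K 2).symm, ?_⟩
  have hmap : (q.map ((frobeniusEquiv K 2).symm : K →+* K)).map (frobenius K 2) = q := by
    rw [Polynomial.map_map]
    convert Polynomial.map_id
    ext x
    simp [frobenius_apply_frobeniusEquiv_symm]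
  have hec := Polynomial.map_frobenius_expand 2 (q.map ((frobeniusEquiv K 2).symm : K →+* K))
  rw [Polynomial.map_expand, hmap, h] at hec
  rw [hec, pow_two]

lemma goppaAux_derivative_finset_prod {ι R : Type*} [CommRing R] [DecidableEq ι] (s : Finset ι)
    (f : ι → R[X]) :
    derivative (∏ i ∈ s, f i) = ∑ i ∈ s, (∏ j ∈ s.erase i, f j) * derivative (f i) := by
  induction s using Finset.induction_on with
  | empty => simp
  | @insert a s ha ih =>
    rw [Finset.prod_insert ha, derivative_mul, ih, Finset.sum_insert ha,
      Finset.erase_insert ha, Finset.mul_sum]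
    congr 1
    · ring
    refine Finset.sum_congr rfl fun i hi => ?_
    rw [Finset.erase_insert_of_ne (Ne.symm fun h : i = a => ha (h ▸ hi)),
      Finset.prod_insert (fun h => ha (Finset.mem_of_mem_erase h))]
    ring

lemma goppaAux_sum_eq_mul_derivative {n : ℕ} {K : Type*} [Field K] (α : Fin n → K)
    (S : Finset (Fin n)) :
    ∑ i ∈ S, ∏ j ∈ univ \ {i}, (X - C (α j))
    = (∏ j ∈ Sᶜ, (X - C (α j))) * derivative (∏ j ∈ S, (X - C (α j))) := by
  rw [goppaAux_derivative_finset_prod]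
  simp only [derivative_sub, derivative_X, derivative_C, sub_zero, mul_one]
  rw [Finset.mul_sum]
  refine Finset.sum_congr rfl fun i hi => ?_
  rw [← Finset.prod_union (disjoint_compl_left.mono_right (Finset.erase_subset _ _))]
  congr 1
  ext j
  by_cases hS : j ∈ S <;> by_cases hji : j = i <;>
    simp_all [Finset.mem_union, Finset.mem_compl, Finset.mem_erase, Finset.mem_sdiff]

lemma goppaAux_coprime_prod {n : ℕ} {K : Type*} [Field K] (α : Fin n → K) (G : K[X])
    (hroots : ∀ i, G.eval (α i) ≠ 0) (T : Finset (Fin n)) :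
    IsCoprime G (∏ j ∈ T, (X - C (α j))) := by
  refine IsCoprime.prod_right fun j _ => ?_
  have hirr := Polynomial.irreducible_X_sub_C (α j)
  have hnd : ¬ (X - C (α j)) ∣ G := by
    rw [Polynomial.dvd_iff_isRoot]
    exact hroots j
  exact ((hirr.coprime_iff_not_dvd).2 hnd).symm

end AuxLemmas

lemma goppaAux_mem_iff {m n : ℕ} (α : Fin n → GaloisField 2 m)
    (G : Polynomial (GaloisField 2 m)) (c : Fin n → ZMod 2) :
    c ∈ goppaCode α G ↔
      G ∣ ∑ i ∈ univ.filter (fun i => c i = 1), ∏ j ∈ univ \ {i}, (X - C (α j)) := by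
  rw [goppaCode, LinearMap.mem_ker, LinearMap.comp_apply, AlgHom.toLinearMap_apply,
    Ideal.Quotient.mkₐ_eq_mk, Ideal.Quotient.eq_zero_iff_mem, Ideal.mem_span_singleton,
    Fintype.linearCombination_apply]
  have hs : (∑ i, c i • ∏ j ∈ univ \ {i}, (X - C (α j)))
       = ∑ i ∈ univ.filter (fun i => c i = 1), ∏ j ∈ univ \ {i}, (X - C (α j)) := by
    rw [Finset.sum_filter]
    refine Finset.sum_congr rfl fun i _ => ?_
    have h0 : ∀ x : ZMod 2, x = 0 ∨ x = 1 := by decide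
    rcases h0 (c i) with h | h <;> simp [h]
  rw [hs]

/-- For a nonconstant square-free `G` of degree `r`, the binary Goppa code `Γ(L, G²)` has
`F₂`-dimension at least `n - m·r` (not merely the generic bound `n - 2·m·r`). -/
theorem goppa_code_sq_dimension (m n : ℕ) (hm : 0 < m) (hn : 0 < n)
    (α : Fin n → GaloisField 2 m) (hα : Function.Injective α)
    (G : Polynomial (GaloisField 2 m)) (hsq : Squarefree G) (hdeg : 0 < G.natDegree)
    (hroots : ∀ i, G.eval (α i) ≠ 0) :
    n - m * G.natDegree ≤ Module.finrank (ZMod 2) (goppaCode α (G ^ 2)) := by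
  classical
  have hGne : G ≠ 0 := fun h => by simp [h] at hdeg
  -- Step 1: `Γ(L, G²) = Γ(L, G)` since `G` is squarefree and we are in characteristic 2.
  have hcode : goppaCode α (G ^ 2) = goppaCode α G := by
    ext c
    rw [goppaAux_mem_iff, goppaAux_mem_iff]
    set S := univ.filter (fun i => c i = 1) with hS
    rw [goppaAux_sum_eq_mul_derivative α S]
    constructor
    · exact fun h => (dvd_pow_self G two_ne_zero).trans h
    · intro h
      have hcop := goppaAux_coprime_prod α G hroots Sᶜ
      have hd : G ∣ derivative (∏ j ∈ S, (X - C (α j))) := hcop.dvd_of_dvd_mul_left h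
      obtain ⟨b, hb⟩ := goppaAux_isSquare_derivative (∏ j ∈ S, (X - C (α j)))
      have hGb : G ∣ b := by
        have hbb : G ∣ b ^ 2 := by rw [pow_two, ← hb]; exact hd
        exact (hsq.dvd_pow_iff_dvd two_ne_zero).1 hbb
      have hsqd : G ^ 2 ∣ derivative (∏ j ∈ S, (X - C (α j))) := by
        rw [hb, ← pow_two]
        exact pow_dvd_pow_of_dvd hGb 2
      exact hsqd.mul_left _
  rw [hcode]
  -- Step 2: generic dimension bound for `Γ(L, G)`.
  set L := ((Ideal.Quotient.mkₐ (ZMod 2) (Ideal.span {G})).toLinearMap.comp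
      (Fintype.linearCombination (ZMod 2)
        (fun i => ∏ j ∈ Finset.univ \ {i}, (X - C (α j))))) with hL
  haveI hfd1 : Module.Finite (GaloisField 2 m) ((GaloisField 2 m)[X] ⧸ Ideal.span {G}) :=
    (AdjoinRoot.powerBasis hGne).finite
  haveI hfd2 : Module.Finite (ZMod 2) ((GaloisField 2 m)[X] ⧸ Ideal.span {G}) :=
    Module.Finite.trans (GaloisField 2 m) _
  have hFfin : Module.finrank (ZMod 2) (GaloisField 2 m) = m := GaloisField.finrank 2 hm.ne'
  have hQ : Module.finrank (ZMod 2) ((GaloisField 2 m)[X] ⧸ Ideal.span {G})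
      = m * G.natDegree := by
    have hA : Module.finrank (GaloisField 2 m) ((GaloisField 2 m)[X] ⧸ Ideal.span {G})
        = G.natDegree :=
      (AdjoinRoot.powerBasis hGne).finrank.trans (by rw [AdjoinRoot.powerBasis_dim])
    rw [← Module.finrank_mul_finrank (ZMod 2) (GaloisField 2 m)
      ((GaloisField 2 m)[X] ⧸ Ideal.span {G}), hFfin, hA]
  have h1 := LinearMap.finrank_range_add_finrank_ker L
  have h2 : Module.finrank (ZMod 2) (LinearMap.range L) ≤ m * G.natDegree := by
    rw [← hQ]; exact Submodule.finrank_le _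
  have h3 : Module.finrank (ZMod 2) (Fin n → ZMod 2) = n := Module.finrank_fin_fun _
  rw [h3] at h1
  show n - m * G.natDegree ≤ Module.finrank (ZMod 2) (LinearMap.ker L)
  omega
end
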